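/- For the mod 2 Steenrod algebra with generators Q^i (i ≥ 1) subject to the Adem relations Q^i Q^j = Σ_{k=0}^{⌊i/2⌋} C(j−k−1, i−2k) Q^{i+j−k} Q^k for 0 < i < 2j: if Q^S is a non-admissible monomial of length k and Q^S = Σ a_J Q^J is its expression in admissible monomials after applying Adem relations, then a_J ≡ 1 mod 2 implies J < S in the excess order on sequences (padding with zeros to compare sequences of different lengths as having smaller length, i.e. shorter sequences are smaller). -/

import Mathlib

noncomputable section

abbrev F : Type := FreeAlgebra (ZMod 2) ℕ

def Q (i : ℕ) : F := FreeAlgebra.ι (ZMod 2) i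

def QI (I : List ℕ) : F := (I.map Q).prod

/-- Binomial coefficient mod 2 with possibly negative arguments (zero out of range). -/
def ch (m n : ℤ) : ZMod 2 :=
  if 0 ≤ m ∧ 0 ≤ n then ((m.toNat).choose n.toNat : ZMod 2) else 0

/-- The relations presenting the mod 2 Steenrod algebra on the generators `Q^i` : the
identification `Q^0 = 1` and the (cohomology) Adem relations
`Q^i Q^j = Σ_{k=0}^{⌊i/2⌋} C(j−k−1, i−2k) Q^{i+j−k} Q^k` for `0 < i < 2j`. -/
inductive steenrodRel : F → F → Prop
  | unit : steenrodRel (Q 0) 1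
  | adem (i j : ℕ) (h1 : 0 < i) (h2 : i < 2 * j) :
      steenrodRel (Q i * Q j)
        (∑ k ∈ Finset.range (i / 2 + 1),
          ch ((j : ℤ) - k - 1) ((i : ℤ) - 2 * k) • (Q (i + j - k) * Q k))

/-- The mod 2 Steenrod algebra `𝒜₂`. -/
abbrev A2 : Type := RingQuot steenrodRel

def mkA : F →ₐ[ZMod 2] A2 := RingQuot.mkAlgHom (ZMod 2) steenrodRel

/-- A monomial `Q^{s_k}⋯Q^{s_1}` (list written left to right) is admissible if
`s_{t+1} ≥ 2 s_t` for all `t`. -/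
def StAdmissible (L : List ℕ) : Prop := List.Chain' (fun x y => 2 * y ≤ x) L

/-- Truncated excesses of a sequence written as a list `[i_k,...,i_1]`. -/
def truncExcess (I : List ℕ) (t : ℕ) : ℤ :=
  (I.reverse.getD t 0 : ℤ) - ∑ s ∈ Finset.range t, (I.reverse.getD s 0 : ℤ)

/-- The excess order on sequences: shorter sequences are smaller; equal-length sequences
are compared by truncated excess at the smallest index where they differ. -/
def seqLT (I J : List ℕ) : Prop :=
  I.length < J.length ∨
    (I.length = J.length ∧
      ∃ t < I.length, (∀ s < t, truncExcess I s = truncExcess J s) ∧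
        truncExcess I t < truncExcess J t)

-- ### auxiliary lemmas

lemma mkA_rel {a b : F} (h : steenrodRel a b) : mkA a = mkA b :=
  RingQuot.mkAlgHom_rel _ h

lemma QI_cons (x : ℕ) (L : List ℕ) : QI (x :: L) = Q x * QI L := by
  simp [QI]

lemma QI_append (A B : List ℕ) : QI (A ++ B) = QI A * QI B := by
  simp [QI]

lemma mkA_zero_mid (P R : List ℕ) : mkA (QI (P ++ 0 :: R)) = mkA (QI (P ++ R)) := by
  have h1 : mkA (Q 0) = 1 := by
    have := mkA_rel steenrodRel.unit
    simpa using this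
  simp [QI_append, QI_cons, map_mul, h1]

lemma mkA_adem (P R : List ℕ) (a b : ℕ) (h1 : 0 < a) (h2 : a < 2 * b) :
    mkA (QI (P ++ a :: b :: R)) =
      ∑ k ∈ Finset.range (a / 2 + 1),
        ch ((b : ℤ) - k - 1) ((a : ℤ) - 2 * k) • mkA (QI (P ++ (a + b - k) :: k :: R)) := by
  have key : mkA (Q a * Q b) = ∑ k ∈ Finset.range (a / 2 + 1),
      ch ((b : ℤ) - k - 1) ((a : ℤ) - 2 * k) • mkA (Q (a + b - k) * Q k) := by
    rw [mkA_rel (steenrodRel.adem a b h1 h2), map_sum]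
    simp [map_smul]
  have e1 : QI (P ++ a :: b :: R) = QI P * (Q a * Q b) * QI R := by
    simp [QI_append, QI_cons, mul_assoc]
  rw [e1, map_mul, map_mul, key, Finset.mul_sum, Finset.sum_mul]
  refine Finset.sum_congr rfl fun k _ => ?_
  have e2 : QI (P ++ (a + b - k) :: k :: R) = QI P * (Q (a + b - k) * Q k) * QI R := by
    simp [QI_append, QI_cons, mul_assoc]
  rw [e2, map_mul, map_mul, mul_smul_comm, smul_mul_assoc]
  simp [map_mul, mul_assoc]

-- moment / termination measure
def moment : List ℕ → ℕ
  | [] => 0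
  | _ :: L => L.sum + moment L

lemma moment_append (A B : List ℕ) :
    moment (A ++ B) = moment A + A.length * B.sum + moment B := by
  induction A with
  | nil => simp [moment]
  | cons a A ih => simp [moment, ih]; ring

def mu (L : List ℕ) : ℕ := 2 * moment L + L.length

lemma mu_zero_mid (P R : List ℕ) : mu (P ++ R) < mu (P ++ 0 :: R) := by
  simp [mu, moment_append, moment, List.sum_cons]
  omega

lemma mu_adem (P R : List ℕ) (a b k : ℕ) (hk : k ≤ a) (hkb : k < b) :
    mu (P ++ (a + b - k) :: k :: R) < mu (P ++ a :: b :: R) := by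
  have hsum : a + b - k + (k + R.sum) = a + (b + R.sum) := by omega
  simp [mu, moment_append, moment, List.sum_cons, hsum]
  omega

-- getD of reversed lists
lemma getD_rev_lt (P R : List ℕ) (x y s : ℕ) (hs : s < R.length) :
    (P ++ x :: y :: R).reverse.getD s 0 = R.reverse.getD s 0 := by
  have h : (P ++ x :: y :: R).reverse = R.reverse ++ (y :: x :: P.reverse) := by
    simp
  rw [h, List.getD_append _ _ _ _ (by simpa using hs)]

lemma getD_rev_len (P R : List ℕ) (x y : ℕ) :
    (P ++ x :: y :: R).reverse.getD R.length 0 = y := by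
  have h : (P ++ x :: y :: R).reverse = R.reverse ++ (y :: x :: P.reverse) := by
    simp
  rw [h, List.getD_append_right _ _ _ _ (by simp)]
  simp

lemma truncExcess_mid_eq (P R : List ℕ) (x y x' y' : ℕ) (s : ℕ) (hs : s < R.length) :
    truncExcess (P ++ x' :: y' :: R) s = truncExcess (P ++ x :: y :: R) s := by
  unfold truncExcess
  rw [getD_rev_lt _ _ _ _ _ hs, getD_rev_lt _ _ _ _ _ hs]
  congr 1
  refine Finset.sum_congr rfl fun u hu => ?_
  have hu' : u < R.length := lt_trans (Finset.mem_range.mp hu) hs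
  rw [getD_rev_lt _ _ _ _ _ hu', getD_rev_lt _ _ _ _ _ hu']

lemma seqLT_mid (P R : List ℕ) (x y x' y' : ℕ) (h : y' < y) :
    seqLT (P ++ x' :: y' :: R) (P ++ x :: y :: R) := by
  right
  refine ⟨by simp, R.length, by simp only [List.length_append, List.length_cons]; omega, fun s hs => truncExcess_mid_eq P R x y x' y' s hs, ?_⟩
  unfold truncExcess
  rw [getD_rev_len, getD_rev_len]
  have hsum : (∑ s ∈ Finset.range R.length, ((P ++ x' :: y' :: R).reverse.getD s 0 : ℤ)) =
      ∑ s ∈ Finset.range R.length, ((P ++ x :: y :: R).reverse.getD s 0 : ℤ) := by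
    refine Finset.sum_congr rfl fun u hu => ?_
    rw [getD_rev_lt _ _ _ _ _ (Finset.mem_range.mp hu),
      getD_rev_lt _ _ _ _ _ (Finset.mem_range.mp hu)]
  rw [hsum]
  exact sub_lt_sub_right (by exact_mod_cast h) _

lemma seqLT_trans {I J K : List ℕ} (h1 : seqLT I J) (h2 : seqLT J K) : seqLT I K := by
  rcases h1 with h1 | ⟨hl1, t1, ht1, he1, hlt1⟩
  · rcases h2 with h2 | ⟨hl2, _⟩
    · exact Or.inl (h1.trans h2)
    · exact Or.inl (hl2 ▸ h1)
  · rcases h2 with h2 | ⟨hl2, t2, ht2, he2, hlt2⟩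
    · exact Or.inl (hl1 ▸ h2)
    · right
      refine ⟨hl1.trans hl2, ?_⟩
      rcases lt_trichotomy t1 t2 with h | h | h
      · exact ⟨t1, ht1, fun s hs => (he1 s hs).trans (he2 s (hs.trans h)),
          hlt1.trans_eq (he2 t1 h)⟩
      · subst h
        exact ⟨t1, ht1, fun s hs => (he1 s hs).trans (he2 s hs), hlt1.trans hlt2⟩
      · exact ⟨t2, by omega, fun s hs => (he1 s (hs.trans h)).trans (he2 s hs),
          (he1 t2 h) ▸ hlt2⟩

lemma exists_bad_pair {L : List ℕ} (h : ¬ StAdmissible L) :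
    ∃ P a b R, L = P ++ a :: b :: R ∧ ¬ (2 * b ≤ a) := by
  induction L with
  | nil => exact absurd List.isChain_nil h
  | cons x L ih =>
    rcases L with _ | ⟨y, L⟩
    · exact absurd (List.isChain_singleton x) h
    · by_cases hxy : 2 * y ≤ x
      · have hL : ¬ StAdmissible (y :: L) := fun hc => h (List.isChain_cons_cons.mpr ⟨hxy, hc⟩)
        obtain ⟨P, a, b, R, hE, hab⟩ := ih hL
        exact ⟨x :: P, a, b, R, by rw [hE]; rfl, hab⟩
      · exact ⟨[], x, y, L, rfl, hxy⟩

lemma main_lemma : ∀ n : ℕ, ∀ S : List ℕ, mu S ≤ n →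
    ∃ c : Finset (List ℕ),
      (∀ J ∈ c, StAdmissible J ∧ (∀ x ∈ J, 1 ≤ x) ∧ (seqLT J S ∨ J = S)) ∧
      mkA (QI S) = ∑ J ∈ c, mkA (QI J) := by
  intro n
  induction n using Nat.strong_induction_on with
  | _ n ih =>
  intro S hS
  by_cases h0 : (0 : ℕ) ∈ S
  · obtain ⟨P, R, rfl⟩ := List.append_of_mem h0
    have hmu := mu_zero_mid P R
    obtain ⟨c, hc, heq⟩ := ih (mu (P ++ R)) (by omega) (P ++ R) le_rfl
    refine ⟨c, fun J hJ => ?_, by rw [mkA_zero_mid]; exact heq⟩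
    obtain ⟨ha, hp, hrel⟩ := hc J hJ
    have hbase : seqLT (P ++ R) (P ++ 0 :: R) := Or.inl (by simp)
    refine ⟨ha, hp, Or.inl ?_⟩
    rcases hrel with h | rfl
    · exact seqLT_trans h hbase
    · exact hbase
  · by_cases hadm : StAdmissible S
    · refine ⟨{S}, ?_, by simp⟩
      intro J hJ
      rw [Finset.mem_singleton] at hJ
      subst hJ
      exact ⟨hadm, fun x hx => Nat.one_le_iff_ne_zero.mpr (fun hx0 => h0 (hx0 ▸ hx)),
        Or.inr rfl⟩
    · obtain ⟨P, a, b, R, rfl, hab⟩ := exists_bad_pair hadm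
      have ha0 : a ≠ 0 := fun h => h0 (by simp [h])
      have ha : 0 < a := Nat.pos_of_ne_zero ha0
      have hlt : a < 2 * b := by omega
      have key : ∀ k ∈ Finset.range (a / 2 + 1), ∃ c : Finset (List ℕ),
          (∀ J ∈ c, StAdmissible J ∧ (∀ x ∈ J, 1 ≤ x) ∧ seqLT J (P ++ a :: b :: R)) ∧
          mkA (QI (P ++ (a + b - k) :: k :: R)) = ∑ J ∈ c, mkA (QI J) := by
        intro k hk
        have hk' : k ≤ a / 2 := by simpa [Nat.lt_succ_iff] using hk
        have hkb : k < b := by omega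
        have hsm : seqLT (P ++ (a + b - k) :: k :: R) (P ++ a :: b :: R) :=
          seqLT_mid P R a b (a + b - k) k hkb
        have hmu := mu_adem P R a b k (by omega) hkb
        obtain ⟨c, hc, heq⟩ := ih (mu (P ++ (a + b - k) :: k :: R)) (by omega) _ le_rfl
        refine ⟨c, fun J hJ => ?_, heq⟩
        obtain ⟨h1, h2, h3⟩ := hc J hJ
        refine ⟨h1, h2, ?_⟩
        rcases h3 with h | rfl
        · exact seqLT_trans h hsm
        · exact hsm
      choose cf hcf hfeq using key
      classical
      set f : List ℕ →₀ ZMod 2 :=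
        ∑ k ∈ (Finset.range (a / 2 + 1)).attach, ch ((b : ℤ) - k.1 - 1) ((a : ℤ) - 2 * k.1) •
          ∑ J ∈ cf k.1 k.2, Finsupp.single J (1 : ZMod 2) with hf
      set T : (List ℕ →₀ ZMod 2) →ₗ[ZMod 2] A2 :=
        Finsupp.linearCombination (ZMod 2) (fun J : List ℕ => mkA (QI J)) with hT
      have hTs : ∀ (c : Finset (List ℕ)),
          T (∑ J ∈ c, Finsupp.single J (1 : ZMod 2)) = ∑ J ∈ c, mkA (QI J) := by
        intro c
        rw [map_sum]
        refine Finset.sum_congr rfl fun J _ => ?_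
        simp [hT, Finsupp.linearCombination_single]
      have hTf : T f = mkA (QI (P ++ a :: b :: R)) := by
        rw [hf, map_sum, mkA_adem P R a b ha hlt, ← Finset.sum_attach (Finset.range (a / 2 + 1))
          (fun k => ch ((b : ℤ) - k - 1) ((a : ℤ) - 2 * k) •
            mkA (QI (P ++ (a + b - k) :: k :: R)))]
        refine Finset.sum_congr rfl fun k _ => ?_
        rw [map_smul, hTs, hfeq k.1 k.2]
      have hsupp : ∀ J ∈ f.support, ∃ k, ∃ hk : k ∈ Finset.range (a / 2 + 1), J ∈ cf k hk := by
        intro J hJ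
        by_contra hcon
        push_neg at hcon
        have hfJ : f J = 0 := by
          rw [hf, Finsupp.finset_sum_apply]
          refine Finset.sum_eq_zero fun k _ => ?_
          rw [Finsupp.smul_apply, Finsupp.finset_sum_apply]
          have : (∑ J' ∈ cf k.1 k.2, Finsupp.single J' (1 : ZMod 2) J) = 0 := by
            refine Finset.sum_eq_zero fun J' hJ' => ?_
            have hne : J' ≠ J := fun h => hcon k.1 k.2 (h ▸ hJ')
            exact Finsupp.single_eq_of_ne' hne
          rw [this, smul_zero]
        exact Finsupp.mem_support_iff.mp hJ hfJ
      have hone : ∀ z : ZMod 2, z ≠ 0 → z = 1 := by decide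
      refine ⟨f.support, fun J hJ => ?_, ?_⟩
      · obtain ⟨k, hk, hJk⟩ := hsupp J hJ
        obtain ⟨h1, h2, h3⟩ := hcf k hk J hJk
        exact ⟨h1, h2, Or.inl h3⟩
      · rw [← hTf, hT, Finsupp.linearCombination_apply, Finsupp.sum]
        refine Finset.sum_congr rfl fun J hJ => ?_
        rw [hone (f J) (Finsupp.mem_support_iff.mp hJ), one_smul]

/-- If `Q^S` is a non-admissible monomial, then its expression `Q^S = Σ a_J Q^J` in
admissible monomials obtained from the Adem relations involves only admissible `J < S`
in the excess order. -/
theorem adem_rewriting_smaller (S : List ℕ) (hpos : ∀ s ∈ S, 1 ≤ s)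
    (hna : ¬ StAdmissible S) :
    ∃ c : Finset (List ℕ),
      (∀ J ∈ c, StAdmissible J ∧ (∀ x ∈ J, 1 ≤ x) ∧ seqLT J S) ∧
      mkA (QI S) = ∑ J ∈ c, mkA (QI J) := by
  obtain ⟨c, hc, heq⟩ := main_lemma (mu S) S le_rfl
  refine ⟨c, fun J hJ => ?_, heq⟩
  obtain ⟨h1, h2, h3⟩ := hc J hJ
  refine ⟨h1, h2, ?_⟩
  rcases h3 with h | rfl
  · exact h
  · exact absurd h1 hna

end
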